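/- Let G be a finite abelian group, ⟨·,·⟩ a non-degenerate symmetric pairing on G, and q a quadratic form on G realizing ⟨·,·⟩. Equip G×G with the non-degenerate pairing ⟨(g,h),(g',h')⟩₂ := ⟨g,g'⟩·conj(⟨h,h'⟩) and set q₂(g,h) := q(g)·conj(q(h)). For a subgroup H ≤ G×G write H^⊥ = {x ∈ G×G : ⟨x,y⟩₂ = 1 for all y ∈ H}, and for D ≤ G write D^⊥ = {k ∈ G : ⟨k,d⟩ = 1 for all d ∈ D}. (If q is identically 1 on D ≤ G, then D ⊆ D^⊥ and q is constant on each coset of D contained in D^⊥, so q descends to D^⊥/D.) Then the assignment Z ↦ (D₊, D₋, σ), where D₊ = {g ∈ G : (g,0) ∈ Z}, D₋ = {h ∈ G : (0,h) ∈ Z}, and σ(g + D₊) = h + D₋ whenever (g,h) ∈ Z, is a well-defined bijection from the set of subgroups Z ≤ G×G satisfying Z^⊥ = Z and q₂ identically 1 on Z, onto the set of triples (D₊, D₋, σ) where D₊, D₋ ≤ G are subgroups on which q is identically 1 and σ : D₊^⊥/D₊ → D₋^⊥/D₋ is a group isomorphism satisfying q(σ(k + D₊)) = q(k) for all k ∈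 D₊^⊥; its inverse sends (D₊, D₋, σ) to Z = {(g,h) ∈ D₊^⊥ × D₋^⊥ : σ(g + D₊) = h + D₋}. -/

import Mathlib

open ComplexConjugate

/-- A `𝕋`-valued pairing on `G`: multiplicative in each argument. -/
def IsPairing {G : Type*} [AddCommGroup G] (γ : G → G → ℂ) : Prop :=
  (∀ g h, ‖γ g h‖ = 1) ∧
    (∀ g g' h, γ (g + g') h = γ g h * γ g' h) ∧
    (∀ g h h', γ g (h + h') = γ g h * γ g h')

theorem IsPairing.ne_zero {G : Type*} [AddCommGroup G] {γ : G → G → ℂ}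
    (hγ : IsPairing γ) (g h : G) : γ g h ≠ 0 := by
  intro h0
  have h1 := hγ.1 g h
  rw [h0] at h1
  simp at h1

theorem IsPairing.zero_left {G : Type*} [AddCommGroup G] {γ : G → G → ℂ}
    (hγ : IsPairing γ) (h : G) : γ 0 h = 1 := by
  have h1 : γ (0 + 0) h = γ 0 h * γ 0 h := hγ.2.1 0 0 h
  rw [add_zero] at h1
  exact (mul_left_cancel₀ (hγ.ne_zero 0 h) (by rw [mul_one]; exact h1)).symm

theorem IsPairing.neg_left {G : Type*} [AddCommGroup G] {γ : G → G → ℂ}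
    (hγ : IsPairing γ) {g : G} (h : G) (hg : γ g h = 1) : γ (-g) h = 1 := by
  have h1 : γ (-g + g) h = γ (-g) h * γ g h := hγ.2.1 (-g) g h
  rw [neg_add_cancel, hγ.zero_left, hg, mul_one] at h1
  exact h1.symm

/-- The subgroup `D^⊥ = {k : γ(k,d) = 1 ∀ d ∈ D}`. -/
def perp {G : Type*} [AddCommGroup G] (γ : G → G → ℂ) (hγ : IsPairing γ)
    (D : AddSubgroup G) : AddSubgroup G where
  carrier := {k | ∀ d ∈ D, γ k d = 1}
  zero_mem' := fun d _ => hγ.zero_left d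
  add_mem' := by
    intro a b ha hb d hd
    rw [hγ.2.1 a b d, ha d hd, hb d hd, mul_one]
  neg_mem' := by
    intro a ha d hd
    exact hγ.neg_left d (ha d hd)

/-- The pairing `⟨(g,h),(g',h')⟩₂ = ⟨g,g'⟩ · conj ⟨h,h'⟩` on `G × G`. -/
noncomputable def pairTwo {G : Type*} [AddCommGroup G] (γ : G → G → ℂ) :
    G × G → G × G → ℂ :=
  fun x y => γ x.1 y.1 * conj (γ x.2 y.2)

theorem IsPairing.pairTwo {G : Type*} [AddCommGroup G] {γ : G → G → ℂ}
    (hγ : IsPairing γ) : IsPairing (_root_.pairTwo γ) := by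
  refine ⟨?_, ?_, ?_⟩
  · intro g h
    show ‖γ g.1 h.1 * conj (γ g.2 h.2)‖ = 1
    rw [norm_mul, Complex.norm_conj, hγ.1, hγ.1, mul_one]
  · intro g g' h
    show γ (g + g').1 h.1 * conj (γ (g + g').2 h.2) =
      (γ g.1 h.1 * conj (γ g.2 h.2)) * (γ g'.1 h.1 * conj (γ g'.2 h.2))
    rw [Prod.fst_add, Prod.snd_add, hγ.2.1, hγ.2.1, map_mul]
    ring
  · intro g h h'
    show γ g.1 (h + h').1 * conj (γ g.2 (h + h').2) =
      (γ g.1 h.1 * conj (γ g.2 h.2)) * (γ g.1 h'.1 * conj (γ g.2 h'.2))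
    rw [Prod.fst_add, Prod.snd_add, hγ.2.2, hγ.2.2, map_mul]
    ring

/-- `q` is a quadratic form realizing the pairing `γ`. -/
def Realizes {G : Type*} [AddCommGroup G] (q : G → ℂ) (γ : G → G → ℂ) : Prop :=
  (∀ g, ‖q g‖ = 1) ∧ (∀ g, q (-g) = q g) ∧
    ∀ g h, γ g h = q g * q h * conj (q (g + h))

/-- The discriminant quotient `D^⊥ / D`. -/
abbrev discQuot {G : Type*} [AddCommGroup G] (γ : G → G → ℂ) (hγ : IsPairing γ)
    (D : AddSubgroup G) :=
  perp γ hγ D ⧸ D.addSubgroupOf (perp γ hγ D)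

section Aux

variable {G : Type*} [AddCommGroup G] {γ : G → G → ℂ}

theorem IsPairing.zero_right (hγ : IsPairing γ) (g : G) : γ g 0 = 1 := by
  have h1 : γ g (0 + 0) = γ g 0 * γ g 0 := hγ.2.2 g 0 0
  rw [add_zero] at h1
  exact (mul_left_cancel₀ (hγ.ne_zero g 0) (by rw [mul_one]; exact h1)).symm

theorem IsPairing.neg_right (hγ : IsPairing γ) (g h : G) : γ g (-h) = (γ g h)⁻¹ := by
  have h1 : γ g (h + -h) = γ g h * γ g (-h) := hγ.2.2 g h (-h)
  rw [add_neg_cancel, hγ.zero_right] at h1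
  field_simp [hγ.ne_zero g h]
  linear_combination -h1

theorem IsPairing.neg_left' (hγ : IsPairing γ) (g h : G) : γ (-g) h = (γ g h)⁻¹ := by
  have h1 : γ (-g + g) h = γ (-g) h * γ g h := hγ.2.1 (-g) g h
  rw [neg_add_cancel, hγ.zero_left] at h1
  field_simp [hγ.ne_zero g h]
  linear_combination -h1

theorem conj_eq_one {z : ℂ} (h : (starRingEnd ℂ) z = 1) : z = 1 := by
  have := congrArg (starRingEnd ℂ) h
  simpa using this

theorem mul_conj_self {z : ℂ} (h : ‖z‖ = 1) : z * (starRingEnd ℂ) z = 1 := by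
  rw [Complex.mul_conj]
  norm_cast
  rw [Complex.normSq_eq_norm_sq, h, one_pow]

theorem eq_of_mul_conj_eq_one {z w : ℂ} (hw : ‖w‖ = 1)
    (h : z * (starRingEnd ℂ) w = 1) : z = w := by
  have hw' : (starRingEnd ℂ) w ≠ 0 := by
    intro h0; rw [h0, mul_zero] at h; exact zero_ne_one h
  have := mul_conj_self hw
  exact mul_right_cancel₀ hw' (h.trans this.symm)

/-- A nontrivial character sums to zero on a finite group. -/
theorem sum_char_eq_zero {H : Type*} [AddCommGroup H] [Fintype H] {f : H → ℂ}
    (hf : ∀ a b, f (a + b) = f a * f b) {a₀ : H} (ha : f a₀ ≠ 1) :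
    ∑ a, f a = 0 := by
  have key : f a₀ * ∑ a, f a = ∑ a, f a := by
    rw [Finset.mul_sum]
    exact Fintype.sum_equiv (Equiv.addLeft a₀) _ _ (fun a => ((hf a₀ a).symm).trans rfl)
  by_contra hS
  exact ha (mul_right_cancel₀ hS (by rw [key, one_mul]))

variable [Fintype G]

theorem card_mul_card_perp (hγ : IsPairing γ) (hsym : ∀ g h, γ g h = γ h g)
    (hnd : ∀ g, (∀ h, γ g h = 1) → g = 0) (H : AddSubgroup G) :
    Nat.card (perp γ hγ H) * Nat.card H = Nat.card G := by
  classical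
  have hinner : ∀ k : G, (∑ d : H, γ k d) =
      if k ∈ perp γ hγ H then (Nat.card H : ℂ) else 0 := by
    intro k
    split_ifs with hk
    · rw [Finset.sum_congr rfl (fun d _ => hk d.1 d.2)]
      simp [Nat.card_eq_fintype_card]
    · have : ∃ d : H, γ k d ≠ 1 := by
        by_contra hall
        push_neg at hall
        exact hk fun d hd => hall ⟨d, hd⟩
      obtain ⟨d₀, hd₀⟩ := this
      exact sum_char_eq_zero (f := fun d : H => γ k d)
        (fun a b => hγ.2.2 k a b) hd₀
  have houter : ∀ d : G, (∑ k : G, γ k d) = if d = 0 then (Nat.card G : ℂ) else 0 := by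
    intro d
    split_ifs with hd
    · subst hd
      rw [Finset.sum_congr rfl (fun k _ => hγ.zero_right k)]
      simp [Nat.card_eq_fintype_card]
    · have : ∃ k : G, γ k d ≠ 1 := by
        by_contra hall
        push_neg at hall
        exact hd (hnd d (fun h => (hsym d h).trans (hall h)))
      obtain ⟨k₀, hk₀⟩ := this
      exact sum_char_eq_zero (f := fun k : G => γ k d)
        (fun a b => hγ.2.1 a b d) hk₀
  have hdouble : (∑ k : G, ∑ d : H, γ k (d : G)) = ∑ d : H, ∑ k : G, γ k (d : G) :=
    Finset.sum_comm
  have hL : (∑ k : G, ∑ d : H, γ k (d : G)) =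
      (Nat.card (perp γ hγ H) : ℂ) * (Nat.card H : ℂ) := by
    simp only [hinner]
    rw [← Finset.sum_filter, Finset.sum_const, nsmul_eq_mul]
    congr 1
    rw [Nat.card_eq_fintype_card, Fintype.card_subtype]
  have hR : (∑ d : H, ∑ k : G, γ k (d : G)) = (Nat.card G : ℂ) := by
    simp only [houter]
    rw [Finset.sum_eq_single (0 : H)]
    · simp
    · intro b _ hb
      rw [if_neg]
      simpa [← Subtype.ext_iff] using hb
    · intro h
      exact absurd (Finset.mem_univ _) h
  have hfin : (Nat.card (perp γ hγ H) : ℂ) * (Nat.card H : ℂ) = (Nat.card G : ℂ) :=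
    hL.symm.trans (hdouble.trans hR)
  exact_mod_cast hfin

omit [Fintype G] in
theorem le_double_perp (hγ : IsPairing γ) (hsym : ∀ g h, γ g h = γ h g)
    (H : AddSubgroup G) : H ≤ perp γ hγ (perp γ hγ H) := by
  intro h hh k hk
  rw [hsym]
  exact hk h hh

theorem double_perp (hγ : IsPairing γ) (hsym : ∀ g h, γ g h = γ h g)
    (hnd : ∀ g, (∀ h, γ g h = 1) → g = 0) (H : AddSubgroup G) :
    perp γ hγ (perp γ hγ H) = H := by
  have h1 := card_mul_card_perp hγ hsym hnd H
  have h2 := card_mul_card_perp hγ hsym hnd (perp γ hγ H)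
  have hpos : 0 < Nat.card (perp γ hγ H) := Nat.card_pos
  have hcard : Nat.card (perp γ hγ (perp γ hγ H)) = Nat.card H := by
    have heq : Nat.card (perp γ hγ (perp γ hγ H)) * Nat.card (perp γ hγ H) =
        Nat.card H * Nat.card (perp γ hγ H) := by
      rw [h2, mul_comm, h1]
    exact Nat.eq_of_mul_eq_mul_right hpos heq
  exact (AddSubgroup.eq_of_le_of_card_ge (le_double_perp hγ hsym H) hcard.le).symm

end Aux

section Lagrangian

variable {G : Type*} [AddCommGroup G] [Fintype G] {γ : G → G → ℂ} (hγ : IsPairing γ)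

theorem mem_comap_inl (Z : AddSubgroup (G × G)) (g : G) :
    g ∈ Z.comap (AddMonoidHom.inl G G) ↔ (g, 0) ∈ Z := Iff.rfl

theorem mem_comap_inr (Z : AddSubgroup (G × G)) (h : G) :
    h ∈ Z.comap (AddMonoidHom.inr G G) ↔ ((0 : G), h) ∈ Z := Iff.rfl

/-- For a Lagrangian `Z`, pairs in `Z` pair equally in both slots. -/
theorem pair_eq {Z : AddSubgroup (G × G)}
    (hZ : perp (pairTwo γ) hγ.pairTwo Z = Z) {x y : G × G}
    (hx : x ∈ Z) (hy : y ∈ Z) : γ x.1 y.1 = γ x.2 y.2 := by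
  have hx' : x ∈ perp (pairTwo γ) hγ.pairTwo Z := by rw [hZ]; exact hx
  have := hx' y hy
  exact eq_of_mul_conj_eq_one (hγ.1 _ _) this

theorem mem_perp_of_mem {Z : AddSubgroup (G × G)}
    (hZ : perp (pairTwo γ) hγ.pairTwo Z = Z) {g h : G} (hgh : (g, h) ∈ Z) :
    g ∈ perp γ hγ (Z.comap (AddMonoidHom.inl G G)) ∧
    h ∈ perp γ hγ (Z.comap (AddMonoidHom.inr G G)) := by
  constructor
  · intro d hd
    have := pair_eq hγ hZ hgh ((mem_comap_inl Z d).1 hd)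
    simpa [hγ.zero_right] using this
  · intro d hd
    have := pair_eq hγ hZ hgh ((mem_comap_inr Z d).1 hd)
    simpa [hγ.zero_right] using this.symm

theorem proj1_surj (hsym : ∀ g h, γ g h = γ h g)
    (hnd : ∀ g, (∀ h, γ g h = 1) → g = 0) {Z : AddSubgroup (G × G)}
    (hZ : perp (pairTwo γ) hγ.pairTwo Z = Z) {g : G}
    (hg : g ∈ perp γ hγ (Z.comap (AddMonoidHom.inl G G))) : ∃ h, (g, h) ∈ Z := by
  set P := Z.map (AddMonoidHom.fst G G) with hP
  have hperp : perp γ hγ P = Z.comap (AddMonoidHom.inl G G) := by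
    ext k
    constructor
    · intro hk
      rw [mem_comap_inl, ← hZ]
      intro y hy
      have : γ k y.1 = 1 := hk y.1 ⟨y, hy, rfl⟩
      show γ k y.1 * (starRingEnd ℂ) (γ 0 y.2) = 1
      rw [this, hγ.zero_left, map_one, mul_one]
    · intro hk x hx
      obtain ⟨y, hy, rfl⟩ := hx
      have := pair_eq hγ hZ ((mem_comap_inl Z k).1 hk) hy
      simpa [hγ.zero_left] using this
  have hdp : perp γ hγ (Z.comap (AddMonoidHom.inl G G)) = P := by
    rw [← hperp, double_perp hγ hsym hnd]
  rw [hdp] at hg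
  obtain ⟨y, hy, rfl⟩ := hg
  exact ⟨y.2, hy⟩

theorem proj2_surj (hsym : ∀ g h, γ g h = γ h g)
    (hnd : ∀ g, (∀ h, γ g h = 1) → g = 0) {Z : AddSubgroup (G × G)}
    (hZ : perp (pairTwo γ) hγ.pairTwo Z = Z) {h : G}
    (hh : h ∈ perp γ hγ (Z.comap (AddMonoidHom.inr G G))) : ∃ g, (g, h) ∈ Z := by
  set P := Z.map (AddMonoidHom.snd G G) with hP
  have hperp : perp γ hγ P = Z.comap (AddMonoidHom.inr G G) := by
    ext k
    constructor
    · intro hk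
      rw [mem_comap_inr, ← hZ]
      intro y hy
      have h1 : γ k y.2 = 1 := hk y.2 ⟨y, hy, rfl⟩
      show γ 0 y.1 * (starRingEnd ℂ) (γ k y.2) = 1
      rw [h1, hγ.zero_left, map_one, mul_one]
    · intro hk x hx
      obtain ⟨y, hy, rfl⟩ := hx
      have := pair_eq hγ hZ ((mem_comap_inr Z k).1 hk) hy
      simpa [hγ.zero_left] using this.symm
  have hdp : perp γ hγ (Z.comap (AddMonoidHom.inr G G)) = P := by
    rw [← hperp, double_perp hγ hsym hnd]
  rw [hdp] at hh
  obtain ⟨y, hy, rfl⟩ := hh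
  exact ⟨y.1, hy⟩

theorem sigma_exists (hsym : ∀ g h, γ g h = γ h g)
    (hnd : ∀ g, (∀ h, γ g h = 1) → g = 0) {Z : AddSubgroup (G × G)}
    (hZ : perp (pairTwo γ) hγ.pairTwo Z = Z) :
    ∃ σ : discQuot γ hγ (Z.comap (AddMonoidHom.inl G G)) ≃+
        discQuot γ hγ (Z.comap (AddMonoidHom.inr G G)),
      ∀ (g h : G) (hgh : (g, h) ∈ Z)
        (hg : g ∈ perp γ hγ (Z.comap (AddMonoidHom.inl G G)))
        (hh : h ∈ perp γ hγ (Z.comap (AddMonoidHom.inr G G))),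
        σ (QuotientAddGroup.mk ⟨g, hg⟩) = QuotientAddGroup.mk ⟨h, hh⟩ := by
  classical
  set Dp := Z.comap (AddMonoidHom.inl G G) with hDp
  set Dm := Z.comap (AddMonoidHom.inr G G) with hDm
  have hsurj₁ : ∀ x : perp γ hγ Dp, ∃ h, (x.1, h) ∈ Z ∧ h ∈ perp γ hγ Dm := by
    intro x
    obtain ⟨h, hh⟩ := proj1_surj hγ hsym hnd hZ x.2
    exact ⟨h, hh, (mem_perp_of_mem hγ hZ hh).2⟩
  have hsurj₂ : ∀ y : perp γ hγ Dm, ∃ g, (g, y.1) ∈ Z ∧ g ∈ perp γ hγ Dp := by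
    intro y
    obtain ⟨g, hg⟩ := proj2_surj hγ hsym hnd hZ y.2
    exact ⟨g, hg, (mem_perp_of_mem hγ hZ hg).1⟩
  set F : perp γ hγ Dp → discQuot γ hγ Dm := fun x =>
    QuotientAddGroup.mk ⟨(hsurj₁ x).choose, (hsurj₁ x).choose_spec.2⟩ with hFdef
  set Fi : perp γ hγ Dm → discQuot γ hγ Dp := fun y =>
    QuotientAddGroup.mk ⟨(hsurj₂ y).choose, (hsurj₂ y).choose_spec.2⟩ with hFidef
  have hF : ∀ (g h : G) (hgh : (g, h) ∈ Z) (hg : g ∈ perp γ hγ Dp)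
      (hh : h ∈ perp γ hγ Dm), F ⟨g, hg⟩ = QuotientAddGroup.mk ⟨h, hh⟩ := by
    intro g h hgh hg hh
    rw [hFdef]
    dsimp only
    rw [QuotientAddGroup.eq]
    rw [AddSubgroup.mem_addSubgroupOf]
    have hc := (hsurj₁ ⟨g, hg⟩).choose_spec.1
    have : ((0 : G), -(hsurj₁ ⟨g, hg⟩).choose + h) ∈ Z := by
      have := Z.add_mem (Z.neg_mem hc) hgh
      simpa using this
    exact (mem_comap_inr Z _).2 this
  have hFi : ∀ (g h : G) (hgh : (g, h) ∈ Z) (hg : g ∈ perp γ hγ Dp)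
      (hh : h ∈ perp γ hγ Dm), Fi ⟨h, hh⟩ = QuotientAddGroup.mk ⟨g, hg⟩ := by
    intro g h hgh hg hh
    rw [hFidef]
    dsimp only
    rw [QuotientAddGroup.eq]
    rw [AddSubgroup.mem_addSubgroupOf]
    have hc := (hsurj₂ ⟨h, hh⟩).choose_spec.1
    have : (-(hsurj₂ ⟨h, hh⟩).choose + g, (0 : G)) ∈ Z := by
      have := Z.add_mem (Z.neg_mem hc) hgh
      simpa using this
    exact (mem_comap_inl Z _).2 this
  have hFadd : ∀ x y : perp γ hγ Dp, F (x + y) = F x + F y := by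
    intro x y
    obtain ⟨h₁, hh₁, hp₁⟩ := hsurj₁ x
    obtain ⟨h₂, hh₂, hp₂⟩ := hsurj₁ y
    have hxy : ((x : G) + y, h₁ + h₂) ∈ Z := by
      have := Z.add_mem hh₁ hh₂
      simpa using this
    have h1 : F x = QuotientAddGroup.mk ⟨h₁, hp₁⟩ := hF x h₁ hh₁ x.2 hp₁
    have h2 : F y = QuotientAddGroup.mk ⟨h₂, hp₂⟩ := hF y h₂ hh₂ y.2 hp₂
    have h3 : F (x + y) = QuotientAddGroup.mk ⟨h₁ + h₂, AddSubgroup.add_mem _ hp₁ hp₂⟩ :=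
      hF ((x : G) + y) (h₁ + h₂) hxy (x + y).2 _
    rw [h1, h2, h3]
    rfl
  set φ : (perp γ hγ Dp) →+ discQuot γ hγ Dm := AddMonoidHom.mk' F hFadd with hφ
  have hker : ∀ x : perp γ hγ Dp, x ∈ Dp.addSubgroupOf (perp γ hγ Dp) → φ x = 0 := by
    intro x hx
    rw [AddSubgroup.mem_addSubgroupOf] at hx
    have h0 : ((x : G), (0 : G)) ∈ Z := (mem_comap_inl Z _).1 hx
    have := hF x 0 h0 x.2 (AddSubgroup.zero_mem _)
    show F x = 0
    rw [this]
    have : (⟨0, AddSubgroup.zero_mem _⟩ : perp γ hγ Dm) = 0 := rfl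
    rw [this]
    rfl
  set σ₀ : discQuot γ hγ Dp →+ discQuot γ hγ Dm :=
    QuotientAddGroup.lift _ φ hker with hσ₀
  have hσ₀mk : ∀ x : perp γ hγ Dp, σ₀ (QuotientAddGroup.mk x) = F x := fun x => rfl
  have hτadd : ∀ x y : perp γ hγ Dm, Fi (x + y) = Fi x + Fi y := by
    intro x y
    obtain ⟨g₁, hh₁, hp₁⟩ := hsurj₂ x
    obtain ⟨g₂, hh₂, hp₂⟩ := hsurj₂ y
    have hxy : (g₁ + g₂, (x : G) + y) ∈ Z := by
      have := Z.add_mem hh₁ hh₂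
      simpa using this
    have h1 : Fi x = QuotientAddGroup.mk ⟨g₁, hp₁⟩ := hFi g₁ x hh₁ hp₁ x.2
    have h2 : Fi y = QuotientAddGroup.mk ⟨g₂, hp₂⟩ := hFi g₂ y hh₂ hp₂ y.2
    have h3 : Fi (x + y) = QuotientAddGroup.mk ⟨g₁ + g₂, AddSubgroup.add_mem _ hp₁ hp₂⟩ :=
      hFi (g₁ + g₂) ((x : G) + y) hxy _ (x + y).2
    rw [h1, h2, h3]
    rfl
  set ψ : (perp γ hγ Dm) →+ discQuot γ hγ Dp := AddMonoidHom.mk' Fi hτadd with hψ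
  have hker' : ∀ y : perp γ hγ Dm, y ∈ Dm.addSubgroupOf (perp γ hγ Dm) → ψ y = 0 := by
    intro y hy
    rw [AddSubgroup.mem_addSubgroupOf] at hy
    have h0 : ((0 : G), (y : G)) ∈ Z := (mem_comap_inr Z _).1 hy
    have := hFi 0 y h0 (AddSubgroup.zero_mem _) y.2
    show Fi y = 0
    rw [this]
    have : (⟨0, AddSubgroup.zero_mem _⟩ : perp γ hγ Dp) = 0 := rfl
    rw [this]
    rfl
  set τ₀ : discQuot γ hγ Dm →+ discQuot γ hγ Dp :=
    QuotientAddGroup.lift _ ψ hker' with hτ₀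
  have hτ₀mk : ∀ y : perp γ hγ Dm, τ₀ (QuotientAddGroup.mk y) = Fi y := fun y => rfl
  have hleft : ∀ z : discQuot γ hγ Dp, τ₀ (σ₀ z) = z := by
    intro z
    induction z using QuotientAddGroup.induction_on with
    | H x =>
      obtain ⟨g, hg⟩ := x
      obtain ⟨h, hgh, hh⟩ := hsurj₁ ⟨g, hg⟩
      rw [hσ₀mk, hF g h hgh hg hh, hτ₀mk, hFi g h hgh hg hh]
  have hright : ∀ z : discQuot γ hγ Dm, σ₀ (τ₀ z) = z := by
    intro z
    induction z using QuotientAddGroup.induction_on with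
    | H y =>
      obtain ⟨h, hh⟩ := y
      obtain ⟨g, hgh, hg⟩ := hsurj₂ ⟨h, hh⟩
      rw [hτ₀mk, hFi g h hgh hg hh, hσ₀mk, hF g h hgh hg hh]
  refine ⟨{ toFun := σ₀, invFun := τ₀, left_inv := hleft, right_inv := hright,
            map_add' := σ₀.map_add }, ?_⟩
  intro g h hgh hg hh
  show σ₀ (QuotientAddGroup.mk ⟨g, hg⟩) = QuotientAddGroup.mk ⟨h, hh⟩
  rw [hσ₀mk, hF g h hgh hg hh]

end Lagrangian

/-- Theorem 3 ((i) ⟷ (iii) ⟷ (iv)): for a finite abelian group `G` with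
non-degenerate symmetric pairing `⟨·,·⟩` realized by a quadratic form `q`, the
assignment `Z ↦ (D₊, D₋, σ)` — with `D₊ = {g : (g,0) ∈ Z}`, `D₋ = {h : (0,h) ∈ Z}`
and `σ(g + D₊) = h + D₋` whenever `(g,h) ∈ Z` — is a well-defined bijection from
the subgroups `Z ≤ G × G` with `Z^⊥ = Z` and `q₂|_Z = 1` onto the triples
`(D₊, D₋, σ)` of subgroups on which `q` is trivial together with an isomorphism
`σ : D₊^⊥/D₊ → D₋^⊥/D₋` preserving `q`; its inverse sends `(D₊, D₋, σ)` to
`Z = {(g,h) ∈ D₊^⊥ × D₋^⊥ : σ(g + D₊) = h + D₋}`. -/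
theorem stmt15 {G : Type*} [AddCommGroup G] [Fintype G]
    (γ : G → G → ℂ) (q : G → ℂ)
    (hγ : IsPairing γ) (hsym : ∀ g h, γ g h = γ h g)
    (hnd : ∀ g, (∀ h, γ g h = 1) → g = 0)
    (hq : Realizes q γ) :
    (∀ Z : AddSubgroup (G × G), perp (pairTwo γ) hγ.pairTwo Z = Z →
      (∀ x ∈ Z, q x.1 * conj (q x.2) = 1) →
      (∀ g ∈ Z.comap (AddMonoidHom.inl G G), q g = 1) ∧
      (∀ h ∈ Z.comap (AddMonoidHom.inr G G), q h = 1) ∧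
      (∀ g h : G, (g, h) ∈ Z →
        g ∈ perp γ hγ (Z.comap (AddMonoidHom.inl G G)) ∧
        h ∈ perp γ hγ (Z.comap (AddMonoidHom.inr G G))) ∧
      (∃! σ : discQuot γ hγ (Z.comap (AddMonoidHom.inl G G)) ≃+
          discQuot γ hγ (Z.comap (AddMonoidHom.inr G G)),
        ∀ (g h : G) (hgh : (g, h) ∈ Z)
          (hg : g ∈ perp γ hγ (Z.comap (AddMonoidHom.inl G G)))
          (hh : h ∈ perp γ hγ (Z.comap (AddMonoidHom.inr G G))),
          σ (QuotientAddGroup.mk ⟨g, hg⟩) = QuotientAddGroup.mk ⟨h, hh⟩) ∧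
      (∀ σ : discQuot γ hγ (Z.comap (AddMonoidHom.inl G G)) ≃+
          discQuot γ hγ (Z.comap (AddMonoidHom.inr G G)),
        (∀ (g h : G) (hgh : (g, h) ∈ Z)
          (hg : g ∈ perp γ hγ (Z.comap (AddMonoidHom.inl G G)))
          (hh : h ∈ perp γ hγ (Z.comap (AddMonoidHom.inr G G))),
          σ (QuotientAddGroup.mk ⟨g, hg⟩) = QuotientAddGroup.mk ⟨h, hh⟩) →
        (∀ (g h : G) (hg : g ∈ perp γ hγ (Z.comap (AddMonoidHom.inl G G)))
          (hh : h ∈ perp γ hγ (Z.comap (AddMonoidHom.inr G G))),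
          σ (QuotientAddGroup.mk ⟨g, hg⟩) = QuotientAddGroup.mk ⟨h, hh⟩ →
            q h = q g) ∧
        (∀ g h : G, (g, h) ∈ Z ↔
          ∃ (hg : g ∈ perp γ hγ (Z.comap (AddMonoidHom.inl G G)))
            (hh : h ∈ perp γ hγ (Z.comap (AddMonoidHom.inr G G))),
            σ (QuotientAddGroup.mk ⟨g, hg⟩) = QuotientAddGroup.mk ⟨h, hh⟩))) ∧
    (∀ Dp Dm : AddSubgroup G, (∀ g ∈ Dp, q g = 1) → (∀ h ∈ Dm, q h = 1) →
      ∀ σ : discQuot γ hγ Dp ≃+ discQuot γ hγ Dm,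
        (∀ (g h : G) (hg : g ∈ perp γ hγ Dp) (hh : h ∈ perp γ hγ Dm),
          σ (QuotientAddGroup.mk ⟨g, hg⟩) = QuotientAddGroup.mk ⟨h, hh⟩ →
            q h = q g) →
        ∃ Z : AddSubgroup (G × G),
          (∀ g h : G, (g, h) ∈ Z ↔
            ∃ (hg : g ∈ perp γ hγ Dp) (hh : h ∈ perp γ hγ Dm),
              σ (QuotientAddGroup.mk ⟨g, hg⟩) = QuotientAddGroup.mk ⟨h, hh⟩) ∧
          perp (pairTwo γ) hγ.pairTwo Z = Z ∧
          (∀ x ∈ Z, q x.1 * conj (q x.2) = 1) ∧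
          Z.comap (AddMonoidHom.inl G G) = Dp ∧
          Z.comap (AddMonoidHom.inr G G) = Dm) := by
  constructor
  · -- Part 1
    intro Z hZ hq2
    have hq0 : q 0 = 1 := by
      have h00 := hq.2.2 0 0
      rw [add_zero, hγ.zero_left] at h00
      have h1 := mul_conj_self (hq.1 0)
      linear_combination -q 0 * h1 - h00
    have hqDp : ∀ g ∈ Z.comap (AddMonoidHom.inl G G), q g = 1 := by
      intro g hg
      have := hq2 (g, 0) ((mem_comap_inl Z g).1 hg)
      simpa [hq0] using this
    have hqDm : ∀ h ∈ Z.comap (AddMonoidHom.inr G G), q h = 1 := by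
      intro h hh
      have := hq2 (0, h) ((mem_comap_inr Z h).1 hh)
      rw [hq0, one_mul] at this
      exact conj_eq_one this
    have hmem : ∀ g h : G, (g, h) ∈ Z →
        g ∈ perp γ hγ (Z.comap (AddMonoidHom.inl G G)) ∧
        h ∈ perp γ hγ (Z.comap (AddMonoidHom.inr G G)) :=
      fun g h hgh => mem_perp_of_mem hγ hZ hgh
    obtain ⟨σc, hσc⟩ := sigma_exists hγ hsym hnd hZ
    -- key: membership from graph condition
    have hback : ∀ (σ' : discQuot γ hγ (Z.comap (AddMonoidHom.inl G G)) ≃+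
          discQuot γ hγ (Z.comap (AddMonoidHom.inr G G))),
        (∀ (g h : G) (hgh : (g, h) ∈ Z)
          (hg : g ∈ perp γ hγ (Z.comap (AddMonoidHom.inl G G)))
          (hh : h ∈ perp γ hγ (Z.comap (AddMonoidHom.inr G G))),
          σ' (QuotientAddGroup.mk ⟨g, hg⟩) = QuotientAddGroup.mk ⟨h, hh⟩) →
        ∀ (g h : G) (hg : g ∈ perp γ hγ (Z.comap (AddMonoidHom.inl G G)))
          (hh : h ∈ perp γ hγ (Z.comap (AddMonoidHom.inr G G))),
          σ' (QuotientAddGroup.mk ⟨g, hg⟩) = QuotientAddGroup.mk ⟨h, hh⟩ →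
          (g, h) ∈ Z := by
      intro σ' hσ' g h hg hh heq
      obtain ⟨h₀, hgh₀⟩ := proj1_surj hγ hsym hnd hZ hg
      have hh₀ := (mem_perp_of_mem hγ hZ hgh₀).2
      have e1 := hσ' g h₀ hgh₀ hg hh₀
      have eqq : (QuotientAddGroup.mk ⟨h₀, hh₀⟩ :
          discQuot γ hγ (Z.comap (AddMonoidHom.inr G G))) = QuotientAddGroup.mk ⟨h, hh⟩ :=
        e1.symm.trans heq
      rw [QuotientAddGroup.eq, AddSubgroup.mem_addSubgroupOf] at eqq
      have h2 : ((0 : G), -h₀ + h) ∈ Z := (mem_comap_inr Z _).1 eqq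
      have := Z.add_mem hgh₀ h2
      simpa using this
    refine ⟨hqDp, hqDm, hmem, ⟨σc, hσc, ?_⟩, ?_⟩
    · -- uniqueness
      intro σ' hσ'
      ext z
      induction z using QuotientAddGroup.induction_on with
      | H x =>
        obtain ⟨g, hg⟩ := x
        obtain ⟨h, hgh⟩ := proj1_surj hγ hsym hnd hZ hg
        have hh := (mem_perp_of_mem hγ hZ hgh).2
        rw [hσ' g h hgh hg hh, hσc g h hgh hg hh]
    · intro σ' hσ'
      constructor
      · intro g h hg hh heq
        have hgh : (g, h) ∈ Z := hback σ' hσ' g h hg hh heq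
        have := hq2 (g, h) hgh
        exact (eq_of_mul_conj_eq_one (hq.1 h) this).symm
      · intro g h
        constructor
        · intro hgh
          exact ⟨(hmem g h hgh).1, (hmem g h hgh).2, hσ' g h hgh _ _⟩
        · rintro ⟨hg, hh, heq⟩
          exact hback σ' hσ' g h hg hh heq
  · -- Part 2
    intro Dp Dm hqp hqm σ hσq
    have hDple : Dp ≤ perp γ hγ Dp := by
      intro d hd d' hd'
      rw [hq.2.2 d d', hqp d hd, hqp d' hd', hqp (d + d') (Dp.add_mem hd hd')]
      simp
    have hDmle : Dm ≤ perp γ hγ Dm := by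
      intro d hd d' hd'
      rw [hq.2.2 d d', hqm d hd, hqm d' hd', hqm (d + d') (Dm.add_mem hd hd')]
      simp
    set Z : AddSubgroup (G × G) := {
      carrier := {x : G × G | ∃ hg : x.1 ∈ perp γ hγ Dp, ∃ hh : x.2 ∈ perp γ hγ Dm,
        σ (QuotientAddGroup.mk ⟨x.1, hg⟩) = QuotientAddGroup.mk ⟨x.2, hh⟩}
      zero_mem' := by
        refine ⟨(perp γ hγ Dp).zero_mem, (perp γ hγ Dm).zero_mem, ?_⟩
        show σ (QuotientAddGroup.mk 0) = QuotientAddGroup.mk 0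
        rw [QuotientAddGroup.mk_zero, QuotientAddGroup.mk_zero, map_zero]
      add_mem' := by
        rintro a b ⟨ha1, ha2, ha3⟩ ⟨hb1, hb2, hb3⟩
        refine ⟨add_mem ha1 hb1, add_mem ha2 hb2, ?_⟩
        show σ (QuotientAddGroup.mk (⟨a.1, ha1⟩ + ⟨b.1, hb1⟩)) =
          QuotientAddGroup.mk (⟨a.2, ha2⟩ + ⟨b.2, hb2⟩)
        rw [QuotientAddGroup.mk_add, QuotientAddGroup.mk_add, map_add, ha3, hb3]
      neg_mem' := by
        rintro a ⟨ha1, ha2, ha3⟩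
        refine ⟨neg_mem ha1, neg_mem ha2, ?_⟩
        show σ (QuotientAddGroup.mk (-⟨a.1, ha1⟩)) = QuotientAddGroup.mk (-⟨a.2, ha2⟩)
        rw [QuotientAddGroup.mk_neg, QuotientAddGroup.mk_neg, map_neg, ha3] } with hZdef
    have hgraph : ∀ g h : G, (g, h) ∈ Z ↔
        ∃ (hg : g ∈ perp γ hγ Dp) (hh : h ∈ perp γ hγ Dm),
          σ (QuotientAddGroup.mk ⟨g, hg⟩) = QuotientAddGroup.mk ⟨h, hh⟩ := fun g h => Iff.rfl
    have hmem_inl : ∀ d ∈ Dp, ((d, 0) : G × G) ∈ Z := by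
      intro d hd
      refine ⟨hDple hd, (perp γ hγ Dm).zero_mem, ?_⟩
      have h1 : (QuotientAddGroup.mk (⟨d, hDple hd⟩ : perp γ hγ Dp) :
          discQuot γ hγ Dp) = 0 := by
        rw [QuotientAddGroup.eq_zero_iff, AddSubgroup.mem_addSubgroupOf]
        exact hd
      rw [h1, map_zero]
      show (0 : discQuot γ hγ Dm) = QuotientAddGroup.mk 0
      rw [QuotientAddGroup.mk_zero]
    have hmem_inr : ∀ d ∈ Dm, (((0 : G), d) : G × G) ∈ Z := by
      intro d hd
      refine ⟨(perp γ hγ Dp).zero_mem, hDmle hd, ?_⟩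
      have h1 : (QuotientAddGroup.mk (⟨d, hDmle hd⟩ : perp γ hγ Dm) :
          discQuot γ hγ Dm) = 0 := by
        rw [QuotientAddGroup.eq_zero_iff, AddSubgroup.mem_addSubgroupOf]
        exact hd
      rw [h1]
      show σ (QuotientAddGroup.mk 0) = 0
      rw [QuotientAddGroup.mk_zero, map_zero]
    have hqZ : ∀ x ∈ Z, q x.2 = q x.1 := by
      rintro x ⟨hg, hh, heq⟩
      exact hσq x.1 x.2 hg hh heq
    have hZle : ∀ x ∈ Z, ∀ y ∈ Z, pairTwo γ x y = 1 := by
      intro x hx y hy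
      have hxy : x + y ∈ Z := Z.add_mem hx hy
      have e1 : γ x.1 y.1 = γ x.2 y.2 := by
        rw [hq.2.2, hq.2.2, hqZ x hx, hqZ y hy]
        have : q (x.2 + y.2) = q (x.1 + y.1) := hqZ (x + y) hxy
        rw [this]
      show γ x.1 y.1 * (starRingEnd ℂ) (γ x.2 y.2) = 1
      rw [e1]
      exact mul_conj_self (hγ.1 _ _)
    have hZperp : perp (pairTwo γ) hγ.pairTwo Z = Z := by
      refine le_antisymm ?_ (fun x hx y hy => hZle x hx y hy)
      intro x hx
      have hx1 : x.1 ∈ perp γ hγ Dp := by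
        intro d hd
        have := hx (d, 0) (hmem_inl d hd)
        simpa [pairTwo, hγ.zero_right] using this
      have hx2 : x.2 ∈ perp γ hγ Dm := by
        intro d hd
        have := hx ((0 : G), d) (hmem_inr d hd)
        rw [show pairTwo γ x (0, d) = γ x.1 0 * (starRingEnd ℂ) (γ x.2 d) from rfl,
          hγ.zero_right, one_mul] at this
        exact conj_eq_one this
      obtain ⟨z, hz⟩ := QuotientAddGroup.mk_surjective (σ (QuotientAddGroup.mk ⟨x.1, hx1⟩))
      have hxz : ((x.1, (z : G)) : G × G) ∈ Z := ⟨hx1, z.2, hz.symm⟩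
      have hsub : x.2 - (z : G) ∈ perp γ hγ (perp γ hγ Dm) := by
        intro h hh
        obtain ⟨w, hw⟩ := QuotientAddGroup.mk_surjective
          (σ.symm (QuotientAddGroup.mk ⟨h, hh⟩))
        have hwh : (((w : G), h) : G × G) ∈ Z := by
          refine ⟨w.2, hh, ?_⟩
          show σ (QuotientAddGroup.mk w) = QuotientAddGroup.mk ⟨h, hh⟩
          rw [hw, AddEquiv.apply_symm_apply]
        have e1 : γ x.1 (w : G) = γ x.2 h := by
          have := hx ((w : G), h) hwh
          exact eq_of_mul_conj_eq_one (hγ.1 _ _) this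
        have e2 : γ x.1 (w : G) = γ (z : G) h := by
          have := hZle _ hxz _ hwh
          exact eq_of_mul_conj_eq_one (hγ.1 _ _) this
        have e3 : γ x.2 h = γ (z : G) h := e1 ▸ e2
        rw [sub_eq_add_neg, hγ.2.1, hγ.neg_left', e3]
        exact mul_inv_cancel₀ (hγ.ne_zero _ _)
      rw [double_perp hγ hsym hnd] at hsub
      have hzx : (QuotientAddGroup.mk z : discQuot γ hγ Dm) =
          QuotientAddGroup.mk ⟨x.2, hx2⟩ := by
        rw [QuotientAddGroup.eq, AddSubgroup.mem_addSubgroupOf]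
        show -(z : G) + x.2 ∈ Dm
        rw [neg_add_eq_sub]
        exact hsub
      have : ((x.1, x.2) : G × G) ∈ Z := ⟨hx1, hx2, by rw [← hz, hzx]⟩
      simpa using this
    refine ⟨Z, hgraph, hZperp, ?_, ?_, ?_⟩
    · intro x hx
      have := hqZ x hx
      rw [this]
      exact mul_conj_self (hq.1 x.1)
    · ext g
      rw [mem_comap_inl]
      constructor
      · rintro ⟨hg, hh, heq⟩
        have h0 : (QuotientAddGroup.mk (⟨(0 : G), hh⟩ : perp γ hγ Dm) :
            discQuot γ hγ Dm) = 0 := by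
          rw [QuotientAddGroup.eq_zero_iff, AddSubgroup.mem_addSubgroupOf]
          exact Dm.zero_mem
        rw [h0] at heq
        have hzero : (QuotientAddGroup.mk ⟨g, hg⟩ : discQuot γ hγ Dp) = 0 := by
          apply σ.injective
          rw [heq, map_zero]
        rw [QuotientAddGroup.eq_zero_iff, AddSubgroup.mem_addSubgroupOf] at hzero
        exact hzero
      · exact hmem_inl g
    · ext h
      rw [mem_comap_inr]
      constructor
      · rintro ⟨hg, hh, heq⟩
        have h0 : (QuotientAddGroup.mk (⟨(0 : G), hg⟩ : perp γ hγ Dp) :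
            discQuot γ hγ Dp) = 0 := by
          rw [QuotientAddGroup.eq_zero_iff, AddSubgroup.mem_addSubgroupOf]
          exact Dp.zero_mem
        rw [h0, map_zero] at heq
        have hzero : (QuotientAddGroup.mk ⟨h, hh⟩ : discQuot γ hγ Dm) = 0 := heq.symm
        rw [QuotientAddGroup.eq_zero_iff, AddSubgroup.mem_addSubgroupOf] at hzero
        exact hzero
      · exact hmem_inr h
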